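/- Exponentiated-weights (softmax/NPG) regret bound: Let A be a finite set, K ≥ 4·ln|A|, and let Â_k: A → ℝ satisfy |Â_k(a)| ≤ W for all k = 0,...,K−1 and a ∈ A, with E_{a∼π_k}[Â_k(a)] = 0 for each k (advantage property). Starting from π_0 = Unif(A) and updating π_{k+1}(a) ∝ π_k(a)·e^{η·Â_k(a)} with η = √(ln|A|)/(√K·W), for any fixed distribution π̃ over A: ∑_{k=0}^{K−1} E_{a∼π̃}[Â_k(a)] ≤ 2W·√(ln|A|·K). -/

import Mathlib

lemma exp_le_quadratic {x : ℝ} (hx : |x| ≤ 1) : Real.exp x ≤ 1 + x + x ^ 2 := by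
  have h := Real.exp_bound hx (n := 3) (by norm_num)
  have hcube : |x| ^ 3 ≤ x ^ 2 := by
    calc |x| ^ 3 ≤ |x| ^ 2 := pow_le_pow_of_le_one (abs_nonneg x) hx (by norm_num)
    _ = x ^ 2 := sq_abs x
  have h2 := (abs_le.mp h).2
  simp [Finset.sum_range_succ, Nat.factorial] at h h2
  nlinarith [(abs_le.mp h).1]

/-- Exponentiated-weights (softmax/NPG) regret bound. -/
theorem npg_regret {A : Type*} [Fintype A] [Nonempty A]
    (K : ℕ) (W η : ℝ) (hW : 0 < W)
    (hK : 4 * Real.log (Fintype.card A) ≤ (K : ℝ))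
    (Ahat : ℕ → A → ℝ) (hbound : ∀ k a, |Ahat k a| ≤ W)
    (π : ℕ → A → ℝ)
    (hπ0 : ∀ a, π 0 a = 1 / (Fintype.card A : ℝ))
    (hπsucc : ∀ k a, π (k + 1) a =
      π k a * Real.exp (η * Ahat k a) / ∑ a', π k a' * Real.exp (η * Ahat k a'))
    (hadv : ∀ k, ∑ a, π k a * Ahat k a = 0)
    (hη : η = Real.sqrt (Real.log (Fintype.card A)) / (Real.sqrt K * W))
    (πt : A → ℝ) (hπt_nonneg : ∀ a, 0 ≤ πt a) (hπt_sum : ∑ a, πt a = 1) :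
    ∑ k ∈ Finset.range K, ∑ a, πt a * Ahat k a ≤
      2 * W * Real.sqrt (Real.log (Fintype.card A) * K) := by
  set N : ℕ := Fintype.card A with hN
  have hNpos : 0 < N := Fintype.card_pos
  have hLnn : 0 ≤ Real.log N := Real.log_natCast_nonneg N
  -- positivity of π
  have hpos : ∀ k a, 0 < π k a := by
    intro k
    induction k with
    | zero => intro a; rw [hπ0]; positivity
    | succ k ih =>
      intro a
      rw [hπsucc]
      exact div_pos (mul_pos (ih a) (Real.exp_pos _))
        (Finset.sum_pos (fun a' _ => mul_pos (ih a') (Real.exp_pos _)) Finset.univ_nonempty)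
  -- π sums to 1
  have hsum : ∀ k, ∑ a, π k a = 1 := by
    intro k
    induction k with
    | zero =>
      simp only [hπ0]
      rw [Finset.sum_const, Finset.card_univ]
      rw [nsmul_eq_mul, ← hN]
      have hN0 : (N:ℝ) ≠ 0 := Nat.cast_ne_zero.mpr hNpos.ne'
      field_simp
    | succ k ih =>
      have hz : (0:ℝ) < ∑ a', π k a' * Real.exp (η * Ahat k a') :=
        Finset.sum_pos (fun a' _ => mul_pos (hpos k a') (Real.exp_pos _)) Finset.univ_nonempty
      simp only [hπsucc, ← Finset.sum_div]
      field_simp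
  -- trivial cases
  rcases Nat.eq_zero_or_pos K with hK0 | hKpos
  · subst hK0
    simp only [Finset.range_zero, Finset.sum_empty]
    positivity
  rcases eq_or_lt_of_le (Nat.one_le_iff_ne_zero.mpr hNpos.ne') with hN1 | hN2
  · -- card A = 1
    have hL0 : Real.log N = 0 := by rw [← hN1]; simp
    rw [hL0, zero_mul, Real.sqrt_zero, mul_zero]
    obtain ⟨a0, ha0⟩ := Fintype.card_eq_one_iff.mp hN1.symm
    have hA0 : ∀ k, Ahat k a0 = 0 := by
      intro k
      have := hadv k
      rw [Fintype.sum_eq_single a0 (fun b hb => absurd (ha0 b) hb)] at this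
      exact (mul_eq_zero.mp this).resolve_left (hpos k a0).ne'
    have : ∀ k, ∑ a, πt a * Ahat k a = 0 := by
      intro k
      rw [Fintype.sum_eq_single a0 (fun b hb => absurd (ha0 b) hb), hA0, mul_zero]
    simp [this]
  -- main case
  have hLpos : 0 < Real.log N := Real.log_pos (by exact_mod_cast hN2)
  have hKR : (0:ℝ) < K := by exact_mod_cast hKpos
  have hsK : 0 < Real.sqrt K := Real.sqrt_pos.mpr hKR
  have hsL : 0 < Real.sqrt (Real.log N) := Real.sqrt_pos.mpr hLpos
  have hηpos : 0 < η := by rw [hη]; positivity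
  have hηW : η * W ≤ 1 := by
    rw [hη]
    rw [div_mul_eq_mul_div, mul_comm (Real.sqrt K) W, ← div_div,
      mul_div_assoc, div_self hW.ne', mul_one]
    rw [div_le_one hsK]
    exact Real.sqrt_le_sqrt (by linarith)
  have habs : ∀ k a, |η * Ahat k a| ≤ 1 := by
    intro k a
    rw [abs_mul, abs_of_pos hηpos]
    calc η * |Ahat k a| ≤ η * W := by
          exact mul_le_mul_of_nonneg_left (hbound k a) hηpos.le
    _ ≤ 1 := hηW
  set z : ℕ → ℝ := fun k => ∑ a', π k a' * Real.exp (η * Ahat k a') with hzdef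
  have hzpos : ∀ k, 0 < z k := fun k =>
    Finset.sum_pos (fun a' _ => mul_pos (hpos k a') (Real.exp_pos _)) Finset.univ_nonempty
  -- bound on log z
  have hlogz : ∀ k, Real.log (z k) ≤ η ^ 2 * W ^ 2 := by
    intro k
    have hzle : z k ≤ 1 + η ^ 2 * W ^ 2 := by
      have h1 : z k ≤ ∑ a, π k a * (1 + η * Ahat k a + (η * Ahat k a) ^ 2) := by
        apply Finset.sum_le_sum
        intro a _
        exact mul_le_mul_of_nonneg_left (exp_le_quadratic (habs k a)) (hpos k a).le
      have h2 : ∑ a, π k a * (1 + η * Ahat k a + (η * Ahat k a) ^ 2)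
          = 1 + η ^ 2 * ∑ a, π k a * (Ahat k a) ^ 2 := by
        have expand : ∀ a, π k a * (1 + η * Ahat k a + (η * Ahat k a) ^ 2)
            = π k a + η * (π k a * Ahat k a) + η ^ 2 * (π k a * (Ahat k a) ^ 2) := by
          intro a; ring
        simp only [expand]
        rw [Finset.sum_add_distrib, Finset.sum_add_distrib, ← Finset.mul_sum,
          ← Finset.mul_sum, hsum k, hadv k, mul_zero, add_zero]
      have h3 : ∑ a, π k a * (Ahat k a) ^ 2 ≤ W ^ 2 := by
        calc ∑ a, π k a * (Ahat k a) ^ 2 ≤ ∑ a, π k a * W ^ 2 := by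
              apply Finset.sum_le_sum
              intro a _
              apply mul_le_mul_of_nonneg_left _ (hpos k a).le
              calc (Ahat k a) ^ 2 = |Ahat k a| ^ 2 := (sq_abs _).symm
              _ ≤ W ^ 2 := pow_le_pow_left₀ (abs_nonneg _) (hbound k a) 2
        _ = W ^ 2 := by rw [← Finset.sum_mul, hsum k, one_mul]
      calc z k ≤ 1 + η ^ 2 * ∑ a, π k a * (Ahat k a) ^ 2 := by rw [← h2]; exact h1
      _ ≤ 1 + η ^ 2 * W ^ 2 := by nlinarith [sq_nonneg η]
    calc Real.log (z k) ≤ z k - 1 := Real.log_le_sub_one_of_pos (hzpos k)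
    _ ≤ η ^ 2 * W ^ 2 := by linarith
  -- log recursion
  set Φ : ℕ → ℝ := fun k => ∑ a, πt a * Real.log (π k a) with hΦdef
  have hstep : ∀ k, Φ (k + 1) = Φ k + η * (∑ a, πt a * Ahat k a) - Real.log (z k) := by
    intro k
    have hlog : ∀ a, Real.log (π (k+1) a)
        = Real.log (π k a) + η * Ahat k a - Real.log (z k) := by
      intro a
      rw [hπsucc]
      rw [Real.log_div (mul_pos (hpos k a) (Real.exp_pos _)).ne' (hzpos k).ne',
        Real.log_mul (hpos k a).ne' (Real.exp_pos _).ne', Real.log_exp]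
    simp only [hΦdef, hlog]
    have expand : ∀ a, πt a * (Real.log (π k a) + η * Ahat k a - Real.log (z k))
        = πt a * Real.log (π k a) + η * (πt a * Ahat k a) - Real.log (z k) * πt a := by
      intro a; ring
    simp only [expand]
    rw [Finset.sum_sub_distrib, Finset.sum_add_distrib, ← Finset.mul_sum,
      ← Finset.mul_sum, hπt_sum, mul_one]
  -- telescoping
  have htel : Φ K - Φ 0 = η * (∑ k ∈ Finset.range K, ∑ a, πt a * Ahat k a)
      - ∑ k ∈ Finset.range K, Real.log (z k) := by
    rw [← Finset.sum_range_sub Φ K]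
    rw [Finset.mul_sum, ← Finset.sum_sub_distrib]
    apply Finset.sum_congr rfl
    intro k _
    rw [hstep k]; ring
  have hΦ0 : Φ 0 = -Real.log N := by
    simp only [hΦdef, hπ0]
    rw [Real.log_div one_ne_zero (by positivity), Real.log_one, zero_sub]
    rw [← Finset.sum_mul, hπt_sum, one_mul]
  have hΦK : Φ K ≤ 0 := by
    apply Finset.sum_nonpos
    intro a _
    apply mul_nonpos_of_nonneg_of_nonpos (hπt_nonneg a)
    apply Real.log_nonpos (hpos K a).le
    calc π K a ≤ ∑ a', π K a' :=
          Finset.single_le_sum (fun a' _ => (hpos K a').le) (Finset.mem_univ a)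
    _ = 1 := hsum K
  have hlogzsum : ∑ k ∈ Finset.range K, Real.log (z k) ≤ K * (η ^ 2 * W ^ 2) := by
    calc ∑ k ∈ Finset.range K, Real.log (z k)
        ≤ ∑ k ∈ Finset.range K, η ^ 2 * W ^ 2 :=
          Finset.sum_le_sum (fun k _ => hlogz k)
    _ = K * (η ^ 2 * W ^ 2) := by rw [Finset.sum_const, Finset.card_range, nsmul_eq_mul]
  have hmain : η * (∑ k ∈ Finset.range K, ∑ a, πt a * Ahat k a)
      ≤ Real.log N + K * (η ^ 2 * W ^ 2) := by
    have := htel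
    linarith
  -- final computation
  have hηW2 : η ^ 2 * W ^ 2 = Real.log N / K := by
    rw [hη]
    field_simp
    linear_combination (K:ℝ) * Real.sq_sqrt hLpos.le - Real.log (N:ℝ) * Real.sq_sqrt hKR.le
  have hrhs : η * (2 * W * Real.sqrt (Real.log N * K)) = 2 * Real.log N := by
    rw [hη, Real.sqrt_mul hLpos.le, div_mul_eq_mul_div, div_eq_iff (by positivity)]
    linear_combination (2 * W * Real.sqrt K) * Real.sq_sqrt hLpos.le
  have hfin : η * (∑ k ∈ Finset.range K, ∑ a, πt a * Ahat k a)
      ≤ η * (2 * W * Real.sqrt (Real.log N * K)) := by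
    rw [hrhs]
    have h1 : (K:ℝ) * (η ^ 2 * W ^ 2) = Real.log N := by
      rw [hηW2]; field_simp
    linarith [hmain]
  exact le_of_mul_le_mul_left hfin hηpos
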